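/- For every n ≥ 1, the number of isomorphism classes of RC-lattices on n elements satisfies |𝓛(n)| = 1 + Σ_{k=1}^{n−3} |𝓛(n,k)|, where 𝓛(n,k) denotes the isomorphism classes of RC-lattices on n elements having nullity k (for n ≤ 3 the sum is empty and |𝓛(n)| = 1). -/

import Mathlib

/-- An element of a lattice is join-reducible if it is the join of two elements
both distinct from it. -/
def JoinReducible {α : Type*} [Lattice α] (x : α) : Prop :=
  ∃ y z : α, y ≠ x ∧ z ≠ x ∧ y ⊔ z = x

/-- An element of a lattice is meet-reducible if it is the meet of two elements
both distinct from it. -/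
def MeetReducible {α : Type*} [Lattice α] (x : α) : Prop :=
  ∃ y z : α, y ≠ x ∧ z ≠ x ∧ y ⊓ z = x

/-- An element is reducible if it is join-reducible or meet-reducible. -/
def Reducible {α : Type*} [Lattice α] (x : α) : Prop :=
  JoinReducible x ∨ MeetReducible x

/-- `Red(L)`: the set of reducible elements of the lattice. -/
def RedSet (α : Type*) [Lattice α] : Set α := {x | Reducible x}

/-- `Irr(L)`: the set of doubly irreducible (i.e. non-reducible) elements. -/
def IrrSet (α : Type*) [Lattice α] : Set α := {x | ¬ Reducible x}

/-- The cover graph of a poset: vertices are the elements, edges are covering pairs. -/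
def coverGraph (α : Type*) [PartialOrder α] : SimpleGraph α where
  Adj x y := x ⋖ y ∨ y ⋖ x
  symm := ⟨fun _ _ h => h.symm⟩
  loopless := ⟨fun x h => by rcases h with h | h <;> exact h.lt.false⟩

/-- The nullity of a (finite) poset: `m - n + c` where `m` is the number of edges,
`n` the number of vertices and `c` the number of connected components of the cover graph. -/
noncomputable def nullity (α : Type*) [PartialOrder α] : ℤ :=
  (Nat.card (coverGraph α).edgeSet : ℤ) - (Nat.card α : ℤ)
    + (Nat.card (coverGraph α).ConnectedComponent : ℤ)

/-- A block: a (finite) lattice whose greatest element is join-reducible and whose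
least element is meet-reducible. -/
def IsBlock (α : Type*) [Lattice α] : Prop :=
  (∃ t : α, (∀ x, x ≤ t) ∧ JoinReducible t) ∧ (∃ b : α, (∀ x, b ≤ x) ∧ MeetReducible b)

/-- The partial order underlying a lattice structure given as a term. -/
def latPO {n : ℕ} (L : Lattice (Fin n)) : PartialOrder (Fin n) :=
  @SemilatticeInf.toPartialOrder _ (@Lattice.toSemilatticeInf _ L)

/-- `L` is an RC-lattice structure: any two reducible elements are comparable. -/
def IsRCLat {n : ℕ} (L : Lattice (Fin n)) : Prop :=
  ∀ x y : Fin n, @Reducible _ L x → @Reducible _ L y →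
    (latPO L).le x y ∨ (latPO L).le y x

/-- The number of isomorphism classes of lattice structures on `Fin n`
(i.e. of lattices with `n` elements) satisfying `P`. -/
noncomputable def numIsoClasses (n : ℕ) (P : Lattice (Fin n) → Prop) : ℕ :=
  Nat.card (Quot fun (L₁ L₂ : {L : Lattice (Fin n) // P L}) =>
    ∃ e : Fin n ≃ Fin n, ∀ x y : Fin n,
      (latPO L₁.1).le x y ↔ (latPO L₂.1).le (e x) (e y))

/-- `𝓑(n,k)`: blocks on `n` elements of nullity `k` which are RC-lattices. -/
def BlockP (n k : ℕ) (L : Lattice (Fin n)) : Prop :=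
  @IsBlock _ L ∧ @nullity (Fin n) (latPO L) = (k : ℤ) ∧ IsRCLat L

/-- `𝓑(n,k,r)`: members of `𝓑(n,k)` with exactly `r` reducible elements. -/
def BlockPr (n k r : ℕ) (L : Lattice (Fin n)) : Prop :=
  BlockP n k L ∧ (@RedSet _ L).ncard = r

/-- `𝓛(n,k)`: RC-lattices on `n` elements of nullity `k`. -/
def RCLatP (n k : ℕ) (L : Lattice (Fin n)) : Prop :=
  IsRCLat L ∧ @nullity (Fin n) (latPO L) = (k : ℤ)

section Aux
variable {α : Type*}

/-- covering pairs -/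
def covPairs (α : Type*) [PartialOrder α] : Set (α × α) := {p | p.1 ⋖ p.2}

lemma card_edgeSet_eq [PartialOrder α] :
    Nat.card (coverGraph α).edgeSet = (covPairs α).ncard := by
  rw [← Nat.card_coe_set_eq]
  refine (Nat.card_eq_of_bijective
    (fun p : (covPairs α) => (⟨s(p.1.1, p.1.2), Or.inl p.2⟩ : (coverGraph α).edgeSet)) ⟨?_, ?_⟩).symm
  · rintro ⟨⟨a, b⟩, hab⟩ ⟨⟨c, d⟩, hcd⟩ h
    rw [Subtype.ext_iff] at h
    simp only [Sym2.eq_iff] at h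
    rcases h with ⟨rfl, rfl⟩ | ⟨rfl, rfl⟩
    · rfl
    · exact absurd hcd.lt (asymm hab.lt)
  · rintro ⟨e, he⟩
    induction e with
    | _ a b =>
      rcases he with h | h
      · exact ⟨⟨(a, b), h⟩, rfl⟩
      · exact ⟨⟨(b, a), h⟩, Subtype.ext (Sym2.eq_swap)⟩

variable [Lattice α]

lemma exists_bot [Finite α] [Nonempty α] : ∃ b : α, ∀ x, b ≤ x := by
  cases nonempty_fintype α
  obtain ⟨b, -, hb⟩ := Finset.exists_minimal (s := Finset.univ) ⟨Classical.arbitrary α, Finset.mem_univ _⟩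
  refine ⟨b, fun x => ?_⟩
  have h1 : b ⊓ x ≤ b := inf_le_left
  have h2 : ¬ (b ⊓ x < b) := fun h => h.not_ge (hb (Finset.mem_univ _) h.le)
  have : b ⊓ x = b := le_antisymm h1 (h1.lt_or_eq.resolve_left h2).ge
  exact inf_eq_left.mp this

lemma reachable_bot [Finite α] {b : α} (hb : ∀ x, b ≤ x) (x : α) :
    (coverGraph α).Reachable x b := by
  induction x using WellFoundedLT.induction with
  | ind x IH =>
    rcases eq_or_ne x b with rfl | hne
    · exact SimpleGraph.Reachable.refl _
    · have hlt : b < x := (hb x).lt_of_ne (Ne.symm hne)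
      obtain ⟨c, -, hc⟩ := exists_le_covBy_of_lt hlt
      exact (SimpleGraph.Adj.reachable (G := coverGraph α) (show x ⋖ c ∨ c ⋖ x from Or.inr hc)).trans (IH c hc.lt)

lemma card_cc_eq_one [Finite α] [Nonempty α] :
    Nat.card (coverGraph α).ConnectedComponent = 1 := by
  obtain ⟨b, hb⟩ := exists_bot (α := α)
  haveI : Subsingleton (coverGraph α).ConnectedComponent := by
    constructor
    intro c d
    refine SimpleGraph.ConnectedComponent.ind₂ (fun u v => ?_) c d
    exact SimpleGraph.ConnectedComponent.eq.2
      ((reachable_bot hb u).trans (reachable_bot hb v).symm)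
  haveI : Nonempty (coverGraph α).ConnectedComponent :=
    ⟨SimpleGraph.connectedComponentMk _ b⟩
  exact Nat.card_unique

lemma nullity_eq [Finite α] [Nonempty α] :
    nullity α = ((covPairs α).ncard : ℤ) - (Nat.card α : ℤ) + 1 := by
  rw [nullity, card_edgeSet_eq, card_cc_eq_one]; push_cast; ring

end Aux
section Aux2
variable {α : Type*} [Lattice α]

lemma not_joinRed_bot {b : α} (hb : ∀ x, b ≤ x) : ¬ JoinReducible b := by
  rintro ⟨y, z, hy, hz, hyz⟩
  exact hy (le_antisymm (hyz ▸ le_sup_left : y ≤ b) (hb y))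

lemma not_meetRed_top {t : α} (ht : ∀ x, x ≤ t) : ¬ MeetReducible t := by
  rintro ⟨y, z, hy, hz, hyz⟩
  exact hy (le_antisymm (ht y) (hyz ▸ inf_le_left : t ≤ y))

lemma joinRed_of_two_covers {x₁ x₂ y : α} (h1 : x₁ ⋖ y) (h2 : x₂ ⋖ y) (hne : x₁ ≠ x₂) :
    JoinReducible y := by
  refine ⟨x₁, x₂, h1.lt.ne, h2.lt.ne, ?_⟩
  have hle : x₁ ⊔ x₂ ≤ y := sup_le h1.lt.le h2.lt.le
  have hlt : x₁ < x₁ ⊔ x₂ := by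
    rcases lt_or_eq_of_le (le_sup_left : x₁ ≤ x₁ ⊔ x₂) with h | h
    · exact h
    · exfalso
      have hx2 : x₂ ≤ x₁ := le_sup_right.trans h.ge
      exact h2.2 (hx2.lt_of_ne hne.symm) h1.lt
  by_contra hne2
  exact h1.2 hlt (hle.lt_of_ne hne2)

lemma meetRed_of_two_covers {x y₁ y₂ : α} (h1 : x ⋖ y₁) (h2 : x ⋖ y₂) (hne : y₁ ≠ y₂) :
    MeetReducible x :=
  joinRed_of_two_covers (α := αᵒᵈ) h1.toDual h2.toDual (fun h => hne (congrArg OrderDual.ofDual h))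

-- uniqueness of the lower cover below a given element for join-irreducible
lemma lower_cover_unique {x₁ x₂ y : α} (hy : ¬ JoinReducible y) (h1 : x₁ ⋖ y) (h2 : x₂ ⋖ y) :
    x₁ = x₂ := by
  by_contra hne
  exact hy (joinRed_of_two_covers h1 h2 hne)

lemma upper_cover_unique {x y₁ y₂ : α} (hx : ¬ MeetReducible x) (h1 : x ⋖ y₁) (h2 : x ⋖ y₂) :
    y₁ = y₂ := by
  by_contra hne
  exact hx (meetRed_of_two_covers h1 h2 hne)

lemma cover_eq_of_le {x₁ x₂ y : α} (h1 : x₁ ⋖ y) (h2 : x₂ ⋖ y) (hle : x₁ ≤ x₂) : x₁ = x₂ := by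
  by_contra hne
  exact h1.2 (hle.lt_of_ne hne) h2.lt

lemma joinRed_two_lower_covers [Finite α] {y : α} (hy : JoinReducible y) :
    ∃ c₁ c₂, c₁ ⋖ y ∧ c₂ ⋖ y ∧ c₁ ≠ c₂ := by
  obtain ⟨u, v, hu, hv, huv⟩ := hy
  have hu' : u < y := (huv ▸ le_sup_left : u ≤ y).lt_of_ne hu
  have hv' : v < y := (huv ▸ le_sup_right : v ≤ y).lt_of_ne hv
  obtain ⟨c₁, hc₁, hc₁y⟩ := exists_le_covBy_of_lt hu'
  obtain ⟨c₂, hc₂, hc₂y⟩ := exists_le_covBy_of_lt hv'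
  refine ⟨c₁, c₂, hc₁y, hc₂y, ?_⟩
  rintro rfl
  exact absurd (huv ▸ sup_le hc₁ hc₂ : y ≤ c₁) hc₁y.lt.not_ge
end Aux2
section Aux3
variable {α : Type*} [Lattice α]

open Classical in
private noncomputable def Fmap : α × α → α ⊕ α := fun p =>
  if Reducible p.1 ∨ ¬ JoinReducible p.2 then Sum.inl p.2 else Sum.inr p.1

lemma F_injOn (hRC : ∀ x y : α, Reducible x → Reducible y → x ≤ y ∨ y ≤ x) :
    Set.InjOn (Fmap (α := α)) (covPairs α) := by
  rintro ⟨x₁, y₁⟩ h₁ ⟨x₂, y₂⟩ h₂ heq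
  have h₁' : x₁ ⋖ y₁ := h₁
  have h₂' : x₂ ⋖ y₂ := h₂
  unfold Fmap at heq
  simp only at heq
  split_ifs at heq with hc₁ hc₂ hc₂
  · obtain rfl : y₁ = y₂ := Sum.inl.inj heq
    by_cases hJ : JoinReducible y₁
    · have hr₁ : Reducible x₁ := hc₁.resolve_right (by simpa using hJ)
      have hr₂ : Reducible x₂ := hc₂.resolve_right (by simpa using hJ)
      rcases hRC _ _ hr₁ hr₂ with h | h
      · exact Prod.ext (cover_eq_of_le h₁' h₂' h) rfl
      · exact Prod.ext (cover_eq_of_le h₂' h₁' h).symm rfl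
    · exact Prod.ext (lower_cover_unique hJ h₁' h₂') rfl
  · obtain rfl : x₁ = x₂ := Sum.inr.inj heq
    push_neg at hc₁
    have : y₁ = y₂ := upper_cover_unique (fun h => hc₁.1 (Or.inr h)) h₁' h₂'
    exact Prod.ext rfl this

lemma m_le_of_sets [Finite α] (hRC : ∀ x y : α, Reducible x → Reducible y → x ≤ y ∨ y ≤ x)
    {A B : Set α}
    (hA : ∀ p : α × α, p ∈ covPairs α → (Reducible p.1 ∨ ¬ JoinReducible p.2) → p.2 ∈ A)
    (hB : ∀ p : α × α, p ∈ covPairs α → ¬(Reducible p.1 ∨ ¬ JoinReducible p.2) → p.1 ∈ B) :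
    (covPairs α).ncard ≤ A.ncard + B.ncard := by
  have hmaps : Set.MapsTo (Fmap (α := α)) (covPairs α) (Sum.inl '' A ∪ Sum.inr '' B) := by
    intro p hp
    unfold Fmap
    by_cases hc : Reducible p.1 ∨ ¬ JoinReducible p.2
    · simp only [if_pos hc]
      exact Or.inl ⟨p.2, hA p hp hc, rfl⟩
    · simp only [if_neg hc]
      exact Or.inr ⟨p.1, hB p hp hc, rfl⟩
  calc (covPairs α).ncard ≤ (Sum.inl '' A ∪ Sum.inr '' B).ncard :=
        Set.ncard_le_ncard_of_injOn _ hmaps (F_injOn hRC) (Set.toFinite _)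
    _ ≤ (Sum.inl '' A : Set (α ⊕ α)).ncard + (Sum.inr '' B : Set (α ⊕ α)).ncard :=
        Set.ncard_union_le _ _
    _ = A.ncard + B.ncard := by
        rw [Set.ncard_image_of_injective _ Sum.inl_injective,
          Set.ncard_image_of_injective _ Sum.inr_injective]

lemma m_le_two_aux [Finite α] {b t r s : α} (hb : ∀ x, b ≤ x) (ht : ∀ x, x ≤ t)
    (hRC : ∀ x y : α, Reducible x → Reducible y → x ≤ y ∨ y ≤ x)
    (hr : Reducible r) (hs : Reducible s) (hrs : r ≠ s) (hrt : r ≠ t) (hst : s ≠ t) :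
    (covPairs α).ncard + 4 ≤ 2 * Nat.card α := by
  have key := m_le_of_sets (A := ({b}ᶜ : Set α)) (B := ({t, r, s}ᶜ : Set α)) hRC ?_ ?_
  · have h1 := Set.ncard_add_ncard_compl ({b} : Set α)
    have h2 := Set.ncard_add_ncard_compl ({t, r, s} : Set α)
    rw [Set.ncard_singleton] at h1
    have h3 : ({t, r, s} : Set α).ncard = 3 := by
      rw [Set.ncard_insert_of_notMem (by simp [hrt.symm, hst.symm] : t ∉ ({r, s} : Set α)),
        Set.ncard_pair hrs]
    rw [h3] at h2
    omega
  · rintro ⟨x, y⟩ hp -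
    have hxy : x ⋖ y := hp
    simp only [Set.mem_compl_iff, Set.mem_singleton_iff]
    rintro rfl
    exact absurd (hb x) hxy.lt.not_ge
  · rintro ⟨x, y⟩ hp hc
    push_neg at hc
    have hxy : x ⋖ y := hp
    simp only [Set.mem_compl_iff, Set.mem_insert_iff, Set.mem_singleton_iff]
    push_neg
    refine ⟨?_, ?_, ?_⟩
    · rintro rfl
      exact absurd (ht y) hxy.lt.not_ge
    · rintro rfl; exact hc.1 hr
    · rintro rfl; exact hc.1 hs

end Aux3
section Aux4
open OrderDual
variable {α : Type*} [Lattice α]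

lemma joinRed_sup {p q : α} (hpq : ¬ p ≤ q) (hqp : ¬ q ≤ p) : JoinReducible (p ⊔ q) :=
  ⟨p, q, fun h => hqp (le_sup_right.trans h.ge), fun h => hpq (le_sup_left.trans h.ge), rfl⟩

lemma meetRed_inf {p q : α} (hpq : ¬ p ≤ q) (hqp : ¬ q ≤ p) : MeetReducible (p ⊓ q) :=
  ⟨p, q, fun h => hpq (h.le.trans inf_le_right), fun h => hqp (h.le.trans inf_le_left), rfl⟩

lemma exists_top [Finite α] [Nonempty α] : ∃ t : α, ∀ x, x ≤ t :=
  exists_bot (α := αᵒᵈ)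

lemma le_m [Finite α] [Nonempty α] : Nat.card α - 1 ≤ (covPairs α).ncard := by
  obtain ⟨b, hb⟩ := exists_bot (α := α)
  have hex : ∀ y : α, y ≠ b → ∃ x, x ⋖ y := by
    intro y hy
    obtain ⟨c, -, hc⟩ := exists_le_covBy_of_lt ((hb y).lt_of_ne (Ne.symm hy))
    exact ⟨c, hc⟩
  choose! f hf using hex
  have key := Set.ncard_le_ncard_of_injOn (s := ({b}ᶜ : Set α)) (t := covPairs α)
    (fun y => ((f y, y) : α × α))
    (fun y hy => (hf y hy : f y ⋖ y))
    (fun y _ z _ h => congrArg Prod.snd h) (Set.toFinite _)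
  have h1 := Set.ncard_add_ncard_compl ({b} : Set α)
  rw [Set.ncard_singleton] at h1
  omega

lemma le_m' [Finite α] {p q : α} (hpq : ¬ p ≤ q) (hqp : ¬ q ≤ p) :
    Nat.card α ≤ (covPairs α).ncard := by
  have : Nonempty α := ⟨p⟩
  obtain ⟨b, hb⟩ := exists_bot (α := α)
  have hex : ∀ y : α, y ≠ b → ∃ x, x ⋖ y := by
    intro y hy
    obtain ⟨c, -, hc⟩ := exists_le_covBy_of_lt ((hb y).lt_of_ne (Ne.symm hy))
    exact ⟨c, hc⟩
  choose! f hf using hex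
  obtain ⟨c₁, c₂, hc₁, hc₂, hcc⟩ := joinRed_two_lower_covers (joinRed_sup hpq hqp)
  set g : α → α × α := fun y => (f y, y) with hg
  have himsub : g '' ({b}ᶜ : Set α) ⊆ covPairs α := by
    rintro - ⟨y, hy, rfl⟩
    exact hf y hy
  have hr₂b : p ⊔ q ≠ b := fun h => hpq (le_sup_left.trans (h.le.trans (hb q)))
  have hnotall : ¬ (covPairs α ⊆ g '' ({b}ᶜ : Set α)) := by
    intro hsub
    have hmem : ∀ c, c ⋖ p ⊔ q → c = f (p ⊔ q) := by
      intro c hc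
      obtain ⟨y, hy, hey⟩ := hsub (show (c, p ⊔ q) ∈ covPairs α from hc)
      have h2 : y = p ⊔ q := congrArg Prod.snd hey
      subst h2
      exact (congrArg Prod.fst hey).symm
    exact hcc ((hmem _ hc₁).trans (hmem _ hc₂).symm)
  have hss : g '' ({b}ᶜ : Set α) ⊂ covPairs α := ⟨himsub, hnotall⟩
  have hlt := Set.ncard_lt_ncard hss (Set.toFinite _)
  rw [Set.ncard_image_of_injOn (fun y _ z _ h => congrArg Prod.snd h)] at hlt
  have h1 := Set.ncard_add_ncard_compl ({b} : Set α)
  rw [Set.ncard_singleton] at h1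
  have h2 : 1 ≤ Nat.card α := Nat.card_pos
  omega

lemma four_le_card [Finite α] {p q : α} (hpq : ¬ p ≤ q) (hqp : ¬ q ≤ p) :
    4 ≤ Nat.card α := by
  have : Nonempty α := ⟨p⟩
  have h1 : p ⊓ q ≠ p := fun h => hpq (h ▸ inf_le_right)
  have h2 : p ⊓ q ≠ q := fun h => hqp (h ▸ inf_le_left)
  have h3 : p ≠ p ⊔ q := fun h => hqp (le_sup_right.trans h.ge)
  have h4 : q ≠ p ⊔ q := fun h => hpq (le_sup_left.trans h.ge)
  have h5 : p ≠ q := fun h => hpq h.le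
  have h6 : p ⊓ q ≠ p ⊔ q := fun h => hpq (le_trans (le_sup_left.trans h.ge) inf_le_right)
  have hcard : ({p ⊓ q, p, q, p ⊔ q} : Set α).ncard = 4 := by
    rw [Set.ncard_insert_of_notMem (by simp [h1, h2, h6]),
      Set.ncard_insert_of_notMem (by simp [h5, h3]),
      Set.ncard_pair h4]
  calc 4 = ({p ⊓ q, p, q, p ⊔ q} : Set α).ncard := hcard.symm
    _ ≤ (Set.univ : Set α).ncard := Set.ncard_le_ncard (Set.subset_univ _) (Set.toFinite _)
    _ = Nat.card α := Set.ncard_univ α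

end Aux4
section Aux5
open OrderDual
variable {α : Type*} [Lattice α]

lemma m_le_special [Finite α] {b t p q : α} (hb : ∀ x, b ≤ x) (ht : ∀ x, x ≤ t)
    (hRC : ∀ x y : α, Reducible x → Reducible y → x ≤ y ∨ y ≤ x)
    (hpq : ¬ p ≤ q) (hqp : ¬ q ≤ p)
    (hR : ∀ x : α, Reducible x → x = b ∨ x = t) :
    (covPairs α).ncard + 4 ≤ 2 * Nat.card α := by
  have hpb : p ≠ b := fun h => hpq (h.le.trans (hb q))
  have hpt : p ≠ t := fun h => hqp ((ht q).trans h.ge)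
  have hbt : b ≠ t := fun h => hpq ((ht p).trans (h ▸ hb q))
  have hJt : JoinReducible t := by
    have h2 := joinRed_sup hpq hqp
    rcases hR _ (Or.inl h2) with h | h
    · exact absurd (le_sup_left.trans (h.le.trans (hb q))) hpq
    · exact h ▸ h2
  have hRb : Reducible b := by
    have h2 : MeetReducible (p ⊓ q) := meetRed_inf hpq hqp
    rcases hR _ (Or.inr h2) with h | h
    · exact h ▸ Or.inr h2
    · exact absurd (le_antisymm (ht p) (h ▸ inf_le_left)) hpt
  have key := m_le_of_sets (A := ({b, t}ᶜ : Set α)) (B := ({b, t}ᶜ : Set α)) hRC ?_ ?_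
  · have h1 := Set.ncard_add_ncard_compl ({b, t} : Set α)
    rw [Set.ncard_pair hbt] at h1
    omega
  · rintro ⟨x, y⟩ hp hcond
    have hxy : x ⋖ y := hp
    simp only [Set.mem_compl_iff, Set.mem_insert_iff, Set.mem_singleton_iff]
    push_neg
    constructor
    · rintro rfl
      exact absurd (hb x) hxy.lt.not_ge
    · rintro rfl
      have hredx : Reducible x := hcond.resolve_right (by simpa using hJt)
      rcases hR x hredx with rfl | rfl
      · exact hxy.2 ((hb p).lt_of_ne hpb.symm) ((ht p).lt_of_ne hpt)
      · exact hxy.lt.ne rfl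
  · rintro ⟨x, y⟩ hp hcond
    push_neg at hcond
    have hxy : x ⋖ y := hp
    simp only [Set.mem_compl_iff, Set.mem_insert_iff, Set.mem_singleton_iff]
    push_neg
    constructor
    · rintro rfl
      exact hcond.1 hRb
    · rintro rfl
      exact absurd (ht y) hxy.lt.not_ge

lemma reducible_dual {x : α} : Reducible (α := αᵒᵈ) (toDual x) ↔ Reducible x := by
  constructor
  · rintro (h | h)
    · exact Or.inr h
    · exact Or.inl h
  · rintro (h | h)
    · exact Or.inr h
    · exact Or.inl h

lemma covPairs_dual_ncard : (covPairs αᵒᵈ).ncard = (covPairs α).ncard := by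
  have himg : (fun p : α × α => ((toDual p.2, toDual p.1) : αᵒᵈ × αᵒᵈ)) '' covPairs α
      = covPairs αᵒᵈ := by
    ext ⟨x, y⟩
    constructor
    · rintro ⟨⟨a, c⟩, hac, heq⟩
      have h1 : toDual c = x := congrArg Prod.fst heq
      have h2 : toDual a = y := congrArg Prod.snd heq
      subst h1; subst h2
      exact CovBy.toDual (hac : a ⋖ c)
    · intro hxy
      refine ⟨(ofDual y, ofDual x), ?_, rfl⟩
      exact CovBy.toDual (hxy : x ⋖ y)
  rw [← himg, Set.ncard_image_of_injOn]
  rintro ⟨a, c⟩ - ⟨a', c'⟩ - heq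
  have h1 : c = c' := congrArg (fun p : αᵒᵈ × αᵒᵈ => ofDual p.1) heq
  have h2 : a = a' := congrArg (fun p : αᵒᵈ × αᵒᵈ => ofDual p.2) heq
  simp [h1, h2]

lemma m_add_four_le [Finite α] {p q : α} (hpq : ¬ p ≤ q) (hqp : ¬ q ≤ p)
    (hRC : ∀ x y : α, Reducible x → Reducible y → x ≤ y ∨ y ≤ x) :
    (covPairs α).ncard + 4 ≤ 2 * Nat.card α := by
  have hne : Nonempty α := ⟨p⟩
  obtain ⟨b, hb⟩ := exists_bot (α := α)
  obtain ⟨t, ht⟩ := exists_top (α := α)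
  have hbt : b ≠ t := fun h => hpq ((ht p).trans (h ▸ hb q))
  by_cases h1 : ∃ r s : α, Reducible r ∧ Reducible s ∧ r ≠ s ∧ r ≠ t ∧ s ≠ t
  · obtain ⟨r, s, hr, hs, hrs, hrt, hst⟩ := h1
    exact m_le_two_aux hb ht hRC hr hs hrs hrt hst
  by_cases h2 : ∃ r s : α, Reducible r ∧ Reducible s ∧ r ≠ s ∧ r ≠ b ∧ s ≠ b
  · obtain ⟨r, s, hr, hs, hrs, hrb, hsb⟩ := h2
    have hdual := m_le_two_aux (α := αᵒᵈ) (b := toDual t) (t := toDual b)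
      (r := toDual r) (s := toDual s)
      (fun x => ht (ofDual x)) (fun x => hb (ofDual x))
      (fun x y hx hy => hRC (ofDual y) (ofDual x)
        (reducible_dual.mp hy) (reducible_dual.mp hx))
      (reducible_dual.mpr hr) (reducible_dual.mpr hs)
      (fun h => hrs (congrArg ofDual h)) (fun h => hrb (congrArg ofDual h))
      (fun h => hsb (congrArg ofDual h))
    rwa [covPairs_dual_ncard, Nat.card_congr (OrderDual.ofDual (α := α))] at hdual
  · push_neg at h1 h2
    apply m_le_special hb ht hRC hpq hqp
    intro x hx
    by_contra hcon
    push_neg at hcon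
    obtain ⟨hxb, hxt⟩ := hcon
    have hr₁ : Reducible (p ⊓ q) := Or.inr (meetRed_inf hpq hqp)
    have hr₂ : Reducible (p ⊔ q) := Or.inl (joinRed_sup hpq hqp)
    have hr₁t : p ⊓ q ≠ t := by
      intro h
      have hpt : p = t := le_antisymm (ht p) (h ▸ inf_le_left)
      exact hqp ((ht q).trans hpt.ge)
    have hr₂b : p ⊔ q ≠ b := fun h => hpq (le_sup_left.trans (h.le.trans (hb q)))
    rcases eq_or_ne x (p ⊓ q) with heq | hne'
    · have hx2 : x ≠ p ⊔ q := by
        rw [heq]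
        exact fun h => hpq (le_trans (le_sup_left.trans h.ge) inf_le_right)
      have h := h1 x (p ⊔ q) hx hr₂ hx2 hxt
      have h' := h2 x (p ⊔ q) hx hr₂ hx2 hxb
      exact hbt (h'.symm.trans h)
    · exact hr₁t (h1 x (p ⊓ q) hx hr₁ hne' hxt)

end Aux5
section Aux6
variable {α : Type*} [Lattice α]

lemma nullity_nonneg [Finite α] [Nonempty α] : 0 ≤ nullity α := by
  rw [nullity_eq]
  have h1 := le_m (α := α)
  have h2 : 1 ≤ Nat.card α := Nat.card_pos
  omega

lemma nullity_total_eq_zero [Finite α] [Nonempty α]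
    (htot : ∀ x y : α, x ≤ y ∨ y ≤ x) : nullity α = 0 := by
  obtain ⟨b, hb⟩ := exists_bot (α := α)
  have hub : (covPairs α).ncard ≤ Nat.card α - 1 := by
    have key := Set.ncard_le_ncard_of_injOn (s := covPairs α) (t := ({b}ᶜ : Set α))
      (fun p => p.2)
      ?_ ?_ (Set.toFinite _)
    · have h1 := Set.ncard_add_ncard_compl ({b} : Set α)
      rw [Set.ncard_singleton] at h1
      omega
    · rintro ⟨x, y⟩ hp
      have hxy : x ⋖ y := hp
      simp only [Set.mem_compl_iff, Set.mem_singleton_iff]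
      rintro rfl
      exact absurd (hb x) hxy.lt.not_ge
    · rintro ⟨x₁, y₁⟩ h₁ ⟨x₂, y₂⟩ h₂ heq
      simp only at heq
      subst heq
      rcases htot x₁ x₂ with h | h
      · exact Prod.ext (cover_eq_of_le h₁ h₂ h) rfl
      · exact Prod.ext (cover_eq_of_le h₂ h₁ h).symm rfl
  have hlb := le_m (α := α)
  have h2 : 1 ≤ Nat.card α := Nat.card_pos
  rw [nullity_eq]
  omega

lemma nullity_noncomp [Finite α] {p q : α} (hpq : ¬ p ≤ q) (hqp : ¬ q ≤ p)
    (hRC : ∀ x y : α, Reducible x → Reducible y → x ≤ y ∨ y ≤ x) :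
    1 ≤ nullity α ∧ nullity α ≤ (Nat.card α : ℤ) - 3 := by
  have : Nonempty α := ⟨p⟩
  have h1 := le_m' hpq hqp
  have h2 := m_add_four_le hpq hqp hRC
  rw [nullity_eq]
  omega

lemma total_orderIso [Finite α] (htot : ∀ x y : α, x ≤ y ∨ y ≤ x) :
    ∃ e : α ≃ Fin (Nat.card α), ∀ x y : α, x ≤ y ↔ e x ≤ e y := by
  classical
  cases nonempty_fintype α
  letI : DecidableEq α := Classical.decEq _
  letI : DecidableRel ((· ≤ ·) : α → α → Prop) := Classical.decRel _
  letI : DecidableRel ((· < ·) : α → α → Prop) := Classical.decRel _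
  haveI : IsTotal α (· ≤ ·) := ⟨htot⟩
  letI lin : LinearOrder α := Lattice.toLinearOrder α
  let e := monoEquivOfFin α (Nat.card_eq_fintype_card (α := α)).symm
  exact ⟨e.symm.toEquiv, fun x y => e.symm.le_iff_le.symm⟩

end Aux6
section Aux7

lemma covPairs_ncard_iso {α β : Type*} [PartialOrder α] [PartialOrder β] (e : α ≃ β)
    (he : ∀ x y : α, x ≤ y ↔ e x ≤ e y) : (covPairs α).ncard = (covPairs β).ncard := by
  have hlt : ∀ x y : α, x < y ↔ e x < e y := by
    intro x y
    rw [lt_iff_le_not_ge, lt_iff_le_not_ge, he, he]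
  have hcov : ∀ x y : α, x ⋖ y ↔ e x ⋖ e y := by
    intro x y
    constructor
    · intro h
      refine ⟨(hlt _ _).1 h.lt, fun c hc1 hc2 => ?_⟩
      have h1 : x < e.symm c := (hlt x (e.symm c)).2 (by simpa using hc1)
      have h2 : e.symm c < y := (hlt (e.symm c) y).2 (by simpa using hc2)
      exact h.2 h1 h2
    · intro h
      refine ⟨(hlt _ _).2 h.lt, fun c hc1 hc2 => ?_⟩
      exact h.2 ((hlt x c).1 hc1) ((hlt c y).1 hc2)
  have himg : (Prod.map e e) '' covPairs α = covPairs β := by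
    ext ⟨u, v⟩
    constructor
    · rintro ⟨⟨x, y⟩, hxy, heq⟩
      have h1 : e x = u := congrArg Prod.fst heq
      have h2 : e y = v := congrArg Prod.snd heq
      subst h1; subst h2
      exact (hcov x y).1 hxy
    · intro huv
      refine ⟨(e.symm u, e.symm v), ?_, by simp⟩
      show e.symm u ⋖ e.symm v
      have := (hcov (e.symm u) (e.symm v)).symm
      apply this.1
      have huv' : u ⋖ v := huv
      simpa using huv'
  rw [← himg, Set.ncard_image_of_injOn]
  rintro ⟨x, y⟩ - ⟨x', y'⟩ - heq
  have h1 : e x = e x' := congrArg Prod.fst heq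
  have h2 : e y = e y' := congrArg Prod.snd heq
  simp [e.injective h1, e.injective h2]

end Aux7

section FinGlue
variable {n : ℕ}

/-- The isomorphism relation on lattice structures satisfying `P`. -/
def isoRel {n : ℕ} {P : Lattice (Fin n) → Prop} (L₁ L₂ : {L : Lattice (Fin n) // P L}) : Prop :=
  ∃ e : Fin n ≃ Fin n, ∀ x y : Fin n,
    (latPO L₁.1).le x y ↔ (latPO L₂.1).le (e x) (e y)

lemma numIsoClasses_eq (P : Lattice (Fin n) → Prop) :
    numIsoClasses n P = Nat.card (Quot (@isoRel n P)) := rfl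

lemma isoRel_equivalence {P : Lattice (Fin n) → Prop} : Equivalence (@isoRel n P) := by
  constructor
  · intro L
    exact ⟨Equiv.refl _, fun x y => Iff.rfl⟩
  · rintro L₁ L₂ ⟨e, he⟩
    refine ⟨e.symm, fun x y => ?_⟩
    have := he (e.symm x) (e.symm y)
    simpa using this.symm
  · rintro L₁ L₂ L₃ ⟨e, he⟩ ⟨f, hf⟩
    exact ⟨e.trans f, fun x y => (he x y).trans (hf (e x) (e y))⟩

lemma latPO_eq (L : Lattice (Fin n)) :
    latPO L = @SemilatticeInf.toPartialOrder _ (@Lattice.toSemilatticeInf _ L) := rfl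

lemma nullity_isoRel (hn : 1 ≤ n) {P : Lattice (Fin n) → Prop}
    {L₁ L₂ : {L : Lattice (Fin n) // P L}} (h : isoRel L₁ L₂) :
    @nullity (Fin n) (latPO L₁.1) = @nullity (Fin n) (latPO L₂.1) := by
  obtain ⟨e, he⟩ := h
  haveI : Nonempty (Fin n) := Fin.pos_iff_nonempty.mp hn
  have h1 : @nullity (Fin n) (latPO L₁.1)
      = ((@covPairs (Fin n) (latPO L₁.1)).ncard : ℤ) - (Nat.card (Fin n) : ℤ) + 1 :=
    @nullity_eq (Fin n) L₁.1 _ _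
  have h2 : @nullity (Fin n) (latPO L₂.1)
      = ((@covPairs (Fin n) (latPO L₂.1)).ncard : ℤ) - (Nat.card (Fin n) : ℤ) + 1 :=
    @nullity_eq (Fin n) L₂.1 _ _
  have h3 := @covPairs_ncard_iso (Fin n) (Fin n) (latPO L₁.1) (latPO L₂.1) e he
  rw [h1, h2, h3]

lemma isoRel_of_total {P : Lattice (Fin n) → Prop} {L₁ L₂ : {L : Lattice (Fin n) // P L}}
    (h₁ : ∀ x y : Fin n, (latPO L₁.1).le x y ∨ (latPO L₁.1).le y x)
    (h₂ : ∀ x y : Fin n, (latPO L₂.1).le x y ∨ (latPO L₂.1).le y x) :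
    isoRel L₁ L₂ := by
  obtain ⟨e₁, he₁⟩ := @total_orderIso (Fin n) L₁.1 _ h₁
  obtain ⟨e₂, he₂⟩ := @total_orderIso (Fin n) L₂.1 _ h₂
  refine ⟨e₁.trans e₂.symm, fun x y => ?_⟩
  have k₂ := he₂ (e₂.symm (e₁ x)) (e₂.symm (e₁ y))
  simp only [Equiv.apply_symm_apply] at k₂
  exact (he₁ x y).trans k₂.symm

end FinGlue

/-- For `n ≥ 1`: `|𝓛(n)| = 1 + Σ_{k=1}^{n-3} |𝓛(n,k)|`. -/
theorem stmt14 (n : ℕ) (hn : 1 ≤ n) :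
    numIsoClasses n (fun L => IsRCLat L) =
      1 + ∑ k ∈ Finset.Icc 1 (n - 3), numIsoClasses n (RCLatP n k) := by
  classical
  haveI hne : Nonempty (Fin n) := Fin.pos_iff_nonempty.mp hn
  haveI : Finite (Lattice (Fin n)) := by
    refine Finite.of_injective (fun L : Lattice (Fin n) => (latPO L).le) ?_
    intro L₁ L₂ h
    exact Lattice.ext fun x y => iff_of_eq (congrFun (congrFun h x) y)
  set P : Lattice (Fin n) → Prop := fun L => IsRCLat L with hP
  haveI : Finite {L : Lattice (Fin n) // P L} := Subtype.finite
  haveI : Finite (Quot (@isoRel n P)) := Quot.finite _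
  have hcardFin : Nat.card (Fin n) = n :=
    Nat.card_eq_fintype_card.trans (Fintype.card_fin n)
  let ν : Quot (@isoRel n P) → ℕ :=
    Quot.lift (fun L : {L : Lattice (Fin n) // P L} => (@nullity (Fin n) (latPO L.1)).toNat)
      (fun a b h => congrArg Int.toNat (nullity_isoRel hn h))
  have hdico : ∀ L : {L : Lattice (Fin n) // P L},
      (∀ x y : Fin n, (latPO L.1).le x y ∨ (latPO L.1).le y x) ∨
      (1 ≤ @nullity (Fin n) (latPO L.1) ∧
        @nullity (Fin n) (latPO L.1) ≤ (n : ℤ) - 3 ∧ 4 ≤ n) := by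
    intro L
    by_cases htot : ∀ x y : Fin n, (latPO L.1).le x y ∨ (latPO L.1).le y x
    · exact Or.inl htot
    · push_neg at htot
      obtain ⟨p, q, hpq, hqp⟩ := htot
      have h4 : 4 ≤ n := hcardFin ▸ @four_le_card (Fin n) L.1 _ p q hpq hqp
      have hb : 1 ≤ @nullity (Fin n) (latPO L.1) ∧
          @nullity (Fin n) (latPO L.1) ≤ (Nat.card (Fin n) : ℤ) - 3 :=
        @nullity_noncomp (Fin n) L.1 _ p q hpq hqp L.2
      refine Or.inr ⟨hb.1, ?_, h4⟩
      have := hb.2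
      rw [hcardFin] at this
      exact this
  have hν0 : ∀ L : {L : Lattice (Fin n) // P L},
      (∀ x y : Fin n, (latPO L.1).le x y ∨ (latPO L.1).le y x) →
      @nullity (Fin n) (latPO L.1) = 0 :=
    fun L htot => @nullity_total_eq_zero (Fin n) L.1 _ _ htot
  have hmem : ∀ q : Quot (@isoRel n P), ν q ∈ Finset.Icc 0 (n - 3) := by
    refine Quot.ind (fun L => ?_)
    simp only [Finset.mem_Icc]
    refine ⟨Nat.zero_le _, ?_⟩
    show (@nullity (Fin n) (latPO L.1)).toNat ≤ n - 3
    rcases hdico L with htot | ⟨h1, h2, h4⟩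
    · rw [hν0 L htot]
      simp
    · omega
  letI : Fintype (Quot (@isoRel n P)) := Fintype.ofFinite _
  have hQcard : Nat.card (Quot (@isoRel n P)) =
      ∑ k ∈ Finset.Icc 0 (n - 3), Nat.card {q : Quot (@isoRel n P) // ν q = k} := by
    rw [Nat.card_eq_fintype_card, ← Finset.card_univ,
      Finset.card_eq_sum_card_fiberwise (fun q _ => hmem q)]
    refine Finset.sum_congr rfl fun k _ => ?_
    rw [Nat.card_eq_fintype_card, Fintype.card_subtype]
  have hstdRC : P (inferInstance : Lattice (Fin n)) := fun x y _ _ => le_total x y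
  have hfib0 : Nat.card {q : Quot (@isoRel n P) // ν q = 0} = 1 := by
    haveI hne0 : Nonempty {q : Quot (@isoRel n P) // ν q = 0} := by
      refine ⟨⟨Quot.mk _ ⟨inferInstance, hstdRC⟩, ?_⟩⟩
      show (@nullity (Fin n) (latPO _)).toNat = 0
      rw [hν0 ⟨inferInstance, hstdRC⟩ (fun x y => le_total x y)]
      rfl
    haveI : Subsingleton {q : Quot (@isoRel n P) // ν q = 0} := by
      constructor
      rintro ⟨q1, hq1⟩ ⟨q2, hq2⟩
      apply Subtype.ext
      induction q1 using Quot.ind with | _ L₁ => ?_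
      induction q2 using Quot.ind with | _ L₂ => ?_
      have t₁ : ∀ x y : Fin n, (latPO L₁.1).le x y ∨ (latPO L₁.1).le y x := by
        rcases hdico L₁ with htot | ⟨h1, -, -⟩
        · exact htot
        · exfalso
          have : (@nullity (Fin n) (latPO L₁.1)).toNat = 0 := hq1
          omega
      have t₂ : ∀ x y : Fin n, (latPO L₂.1).le x y ∨ (latPO L₂.1).le y x := by
        rcases hdico L₂ with htot | ⟨h1, -, -⟩
        · exact htot
        · exfalso
          have : (@nullity (Fin n) (latPO L₂.1)).toNat = 0 := hq2
          omega
      exact Quot.sound (isoRel_of_total t₁ t₂)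
    exact Nat.card_unique
  have hfib : ∀ k : ℕ, Nat.card {q : Quot (@isoRel n P) // ν q = k}
      = numIsoClasses n (RCLatP n k) := by
    intro k
    rw [numIsoClasses_eq]
    have hval : ∀ L : {L : Lattice (Fin n) // RCLatP n k L},
        ν (Quot.mk _ (⟨L.1, L.2.1⟩ : {L : Lattice (Fin n) // P L})) = k := by
      intro L
      show (@nullity (Fin n) (latPO L.1)).toNat = k
      rw [L.2.2]
      exact Int.toNat_natCast k
    let F : Quot (@isoRel n (RCLatP n k)) → {q : Quot (@isoRel n P) // ν q = k} :=
      Quot.lift (fun L => ⟨Quot.mk _ ⟨L.1, L.2.1⟩, hval L⟩)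
        (fun a b h => Subtype.ext (Quot.sound h))
    have hF_mk : ∀ L : {L : Lattice (Fin n) // RCLatP n k L},
        F (Quot.mk _ L) = ⟨Quot.mk _ ⟨L.1, L.2.1⟩, hval L⟩ := fun _ => rfl
    have hν_mk : ∀ L : {L : Lattice (Fin n) // P L},
        ν (Quot.mk _ L) = (@nullity (Fin n) (latPO L.1)).toNat := fun _ => rfl
    refine (Nat.card_congr (Equiv.ofBijective F ⟨?_, ?_⟩)).symm
    · intro a b hab
      induction a using Quot.ind with | _ L₁ => ?_
      induction b using Quot.ind with | _ L₂ => ?_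
      rw [hF_mk, hF_mk] at hab
      have hval' : Quot.mk (@isoRel n P) ⟨L₁.1, L₁.2.1⟩ = Quot.mk _ ⟨L₂.1, L₂.2.1⟩ :=
        congrArg Subtype.val hab
      have hrel : isoRel (P := P) ⟨L₁.1, L₁.2.1⟩ ⟨L₂.1, L₂.2.1⟩ :=
        (isoRel_equivalence.eqvGen_iff).mp (Quot.eq.mp hval')
      exact Quot.sound hrel
    · rintro ⟨q, hq⟩
      induction q using Quot.ind with | _ L => ?_
      rw [hν_mk] at hq
      have h0 : 0 ≤ @nullity (Fin n) (latPO L.1) := @nullity_nonneg (Fin n) L.1 _ _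
      have hη : @nullity (Fin n) (latPO L.1) = (k : ℤ) := by omega
      refine ⟨Quot.mk _ ⟨L.1, ⟨L.2, hη⟩⟩, ?_⟩
      rw [hF_mk]
  have hsplit : Finset.Icc 0 (n - 3) = insert 0 (Finset.Icc 1 (n - 3)) := by
    ext x
    simp only [Finset.mem_Icc, Finset.mem_insert]
    omega
  rw [numIsoClasses_eq, hQcard, hsplit, Finset.sum_insert (by simp), hfib0]
  congr 1
  exact Finset.sum_congr rfl fun k _ => hfib k
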